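/- arXiv:2208.03844 — 2 statements merged into one kernel-verified Lean document; each statement's English description precedes it below -/
import Mathlib

section
/- Cantor normal forms admit Euclidean division: for all CNFs a and b with b > 0, there exist CNFs c and d such that a = b · c + d and d < b. -/
/-- Unlabelled binary trees. -/
inductive T : Type
  | zero : T
  | node : T → T → T

/-- The hereditary lexicographical order on binary trees. -/
inductive tlt : T → T → Prop
  | z {a b : T} : tlt T.zero (T.node a b)
  | l {a b c d : T} : tlt a c → tlt (T.node a b) (T.node c d)
  | r {a b d : T} : tlt b d → tlt (T.node a b) (T.node a d)

/-- The reflexive closure of `tlt`. -/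
def tle (s t : T) : Prop := tlt s t ∨ s = t

/-- The left subtree, if it exists. -/
def left : T → T
  | T.zero => T.zero
  | T.node a _ => a

/-- The Cantor normal form predicate. -/
inductive isCNF : T → Prop
  | z : isCNF T.zero
  | n {s t : T} : isCNF s → isCNF t → tle (left t) s → isCNF (T.node s t)

open Classical in
/-- Addition of Cantor normal forms. -/
noncomputable def tadd : T → T → T
  | T.zero, b => b
  | a, T.zero => a
  | T.node a c, T.node b d =>
      if tlt a b then T.node b d else T.node a (tadd c (T.node b d))

open Classical in
/-- Multiplication of Cantor normal forms. -/
noncomputable def tmul : T → T → T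
  | _, T.zero => T.zero
  | T.zero, _ => T.zero
  | T.node a c, T.node T.zero d => tadd (T.node a c) (tmul (T.node a c) d)
  | T.node a c, T.node b d =>
      tadd (T.node (tadd a b) T.zero) (tmul (T.node a c) d)

open Ordinal

noncomputable def eval : T → Ordinal.{0}
  | T.zero => 0
  | T.node a b => ω ^ eval a + eval b

@[simp] lemma eval_zero : eval T.zero = 0 := rfl
@[simp] lemma eval_node (a b : T) : eval (T.node a b) = ω ^ eval a + eval b := rfl

@[simp] lemma left_zero : left T.zero = T.zero := rfl
@[simp] lemma left_node (a b : T) : left (T.node a b) = a := rfl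

lemma tlt_trichotomy : ∀ s t : T, tlt s t ∨ s = t ∨ tlt t s := by
  intro s
  induction s with
  | zero =>
    intro t
    cases t with
    | zero => exact Or.inr (Or.inl rfl)
    | node c d => exact Or.inl tlt.z
  | node a b iha ihb =>
    intro t
    cases t with
    | zero => exact Or.inr (Or.inr tlt.z)
    | node c d =>
      rcases iha c with h | rfl | h
      · exact Or.inl (tlt.l h)
      · rcases ihb d with h | rfl | h
        · exact Or.inl (tlt.r h)
        · exact Or.inr (Or.inl rfl)
        · exact Or.inr (Or.inr (tlt.r h))
      · exact Or.inr (Or.inr (tlt.l h))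

lemma isCNF.fst {s t : T} (h : isCNF (T.node s t)) : isCNF s := by cases h; assumption
lemma isCNF.snd {s t : T} (h : isCNF (T.node s t)) : isCNF t := by cases h; assumption
lemma isCNF.le {s t : T} (h : isCNF (T.node s t)) : tle (left t) s := by cases h; assumption

lemma isCNF_left {t : T} (h : isCNF t) : isCNF (left t) := by
  cases t with
  | zero => exact isCNF.z
  | node a b => exact h.fst

def size : T → ℕ
  | T.zero => 0
  | T.node a b => size a + size b + 1

@[simp] lemma size_zero : size T.zero = 0 := rfl
@[simp] lemma size_node (a b : T) : size (T.node a b) = size a + size b + 1 := rfl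

lemma size_left_le (t : T) : size (left t) ≤ size t := by
  cases t with
  | zero => exact le_rfl
  | node a b => simp; omega

lemma main_mono : ∀ n : ℕ,
    (∀ t : T, size t ≤ n → isCNF t → eval t < ω ^ (eval (left t) + 1)) ∧
    (∀ s t : T, size s + size t ≤ n → isCNF s → isCNF t → tlt s t → eval s < eval t) := by
  intro n
  induction n using Nat.strong_induction_on with
  | _ n IH =>
  constructor
  · intro t ht hc
    cases t with
    | zero =>
      simpa using opow_pos (0 + 1 : Ordinal) omega0_pos
    | node a b =>
      have hb : size b < n := by simp at ht; omega
      have hBbound : eval b < ω ^ (eval (left b) + 1) :=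
        (IH (size b) hb).1 b le_rfl hc.snd
      have hle : eval (left b) ≤ eval a := by
        rcases hc.le with h | h
        · have hlb : size (left b) + size a < n := by
            have := size_left_le b
            simp at ht; omega
          exact ((IH _ hlb).2 (left b) a le_rfl (isCNF_left hc.snd) hc.fst h).le
        · rw [h]
      have hB : eval b < ω ^ (eval a + 1) :=
        lt_of_lt_of_le hBbound (opow_le_opow_right omega0_pos (by exact add_le_add_left hle 1))
      have hA : ω ^ eval a < ω ^ (eval a + 1) :=
        (opow_lt_opow_iff_right one_lt_omega0).2 (lt_add_one _)
      simpa using principal_add_omega0_opow _ hA hB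
  · intro s t hst hcs hct h
    cases h with
    | @z a b =>
      have : (0:Ordinal) < ω ^ eval a := opow_pos _ omega0_pos
      simpa using lt_of_lt_of_le this le_self_add
    | @l a b c d h =>
      have hac : eval a < eval c := by
        have : size a + size c < n := by simp at hst; omega
        exact (IH _ this).2 a c le_rfl hcs.fst hct.fst h
      have hs : eval (T.node a b) < ω ^ (eval a + 1) := by
        have : size (T.node a b) < n := by simp at hst ⊢; omega
        exact (IH _ this).1 _ le_rfl hcs
      have h1 : ω ^ (eval a + 1) ≤ ω ^ eval c := by
        apply opow_le_opow_right omega0_pos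
        rw [add_one_eq_succ]; exact Order.succ_le_of_lt hac
      calc eval (T.node a b) < ω ^ (eval a + 1) := hs
        _ ≤ ω ^ eval c := h1
        _ ≤ eval (T.node c d) := by simp
    | @r a b d h =>
      have hbd : eval b < eval d := by
        have : size b + size d < n := by simp at hst; omega
        exact (IH _ this).2 b d le_rfl hcs.snd hct.snd h
      simpa using hbd

lemma eval_lt_of_tlt {s t : T} (hs : isCNF s) (ht : isCNF t) (h : tlt s t) :
    eval s < eval t :=
  (main_mono (size s + size t)).2 s t le_rfl hs ht h

lemma eval_bound {t : T} (h : isCNF t) : eval t < ω ^ (eval (left t) + 1) :=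
  (main_mono (size t)).1 t le_rfl h

lemma eval_le_of_tle {s t : T} (hs : isCNF s) (ht : isCNF t) (h : tle s t) :
    eval s ≤ eval t := by
  rcases h with h | rfl
  · exact (eval_lt_of_tlt hs ht h).le
  · exact le_rfl

lemma tlt_of_eval_lt {s t : T} (hs : isCNF s) (ht : isCNF t) (h : eval s < eval t) :
    tlt s t := by
  rcases tlt_trichotomy s t with h' | rfl | h'
  · exact h'
  · exact absurd h (lt_irrefl _)
  · exact absurd (eval_lt_of_tlt ht hs h') (not_lt.2 h.le)

lemma tle_of_eval_le {s t : T} (hs : isCNF s) (ht : isCNF t) (h : eval s ≤ eval t) :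
    tle s t := by
  rcases tlt_trichotomy s t with h' | rfl | h'
  · exact Or.inl h'
  · exact Or.inr rfl
  · exact absurd (eval_lt_of_tlt ht hs h') (not_lt.2 h)

lemma eval_injective {s t : T} (hs : isCNF s) (ht : isCNF t) (h : eval s = eval t) :
    s = t := by
  rcases tlt_trichotomy s t with h' | rfl | h'
  · exact absurd (eval_lt_of_tlt hs ht h') (by rw [h]; exact lt_irrefl _)
  · rfl
  · exact absurd (eval_lt_of_tlt ht hs h') (by rw [h]; exact lt_irrefl _)

@[simp] lemma tadd_zero_left (b : T) : tadd T.zero b = b := by cases b <;> rfl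
@[simp] lemma tadd_zero_right (a : T) : tadd a T.zero = a := by cases a <;> rfl
lemma tadd_lt {a b : T} (c d : T) (h : tlt a b) :
    tadd (T.node a c) (T.node b d) = T.node b d := by
  rw [tadd, if_pos h]

lemma tadd_not_lt {a b : T} (c d : T) (h : ¬ tlt a b) :
    tadd (T.node a c) (T.node b d) = T.node a (tadd c (T.node b d)) := by
  rw [tadd, if_neg h]

lemma tle_zero (s : T) : tle T.zero s := by
  cases s with
  | zero => exact Or.inr rfl
  | node a b => exact Or.inl tlt.z

lemma tadd_eval : ∀ a b : T, isCNF a → isCNF b → eval (tadd a b) = eval a + eval b := by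
  intro a
  induction a with
  | zero => intro b _ _; simp
  | node a c _ ihc =>
    intro b ha hb
    cases b with
    | zero => simp
    | node b d =>
      by_cases h : tlt a b
      · rw [tadd_lt _ _ h]
        have h1 : eval (T.node a c) < ω ^ eval b := by
          refine lt_of_lt_of_le (eval_bound ha) (opow_le_opow_right omega0_pos ?_)
          rw [left_node, add_one_eq_succ]
          exact Order.succ_le_of_lt (eval_lt_of_tlt ha.fst hb.fst h)
        exact (add_absorp h1 (by simp : ω ^ eval b ≤ eval (T.node b d))).symm
      · rw [tadd_not_lt _ _ h, eval_node, eval_node, ihc _ ha.snd hb, eval_node, add_assoc]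

lemma tle_left_tadd {c b d a : T} (h1 : tle (left c) a) (h2 : tle b a) :
    tle (left (tadd c (T.node b d))) a := by
  cases c with
  | zero => simpa using h2
  | node c1 c2 =>
    by_cases h : tlt c1 b
    · rw [tadd_lt _ _ h]; simpa using h2
    · rw [tadd_not_lt _ _ h]; simpa using h1

lemma tadd_isCNF : ∀ a b : T, isCNF a → isCNF b → isCNF (tadd a b) := by
  intro a
  induction a with
  | zero => intro b _ hb; simpa
  | node a c _ ihc =>
    intro b ha hb
    cases b with
    | zero => simpa
    | node b d =>
      by_cases h : tlt a b
      · rw [tadd_lt _ _ h]; exact hb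
      · rw [tadd_not_lt _ _ h]
        refine isCNF.n ha.fst (ihc _ ha.snd hb) (tle_left_tadd ha.le ?_)
        rcases tlt_trichotomy a b with h' | rfl | h'
        · exact absurd h' h
        · exact Or.inr rfl
        · exact Or.inl h'

@[simp] lemma tmul_zero_right (a : T) : tmul a T.zero = T.zero := by cases a <;> rfl
@[simp] lemma tmul_zero_left (b : T) : tmul T.zero b = T.zero := by cases b <;> rfl

lemma tmul_node_zero (a c d : T) :
    tmul (T.node a c) (T.node T.zero d) = tadd (T.node a c) (tmul (T.node a c) d) := by
  rw [tmul]

lemma tmul_node_node (a c b1 b2 d : T) :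
    tmul (T.node a c) (T.node (T.node b1 b2) d) =
      tadd (T.node (tadd a (T.node b1 b2)) T.zero) (tmul (T.node a c) d) := by
  rw [tmul]
  intro h; exact T.noConfusion h

lemma mul_omega0_eq {A X : Ordinal.{0}} (h1 : ω ^ A ≤ X) (h2 : X < ω ^ (A + 1)) :
    X * ω = ω ^ (A + 1) := by
  apply le_antisymm
  · rw [add_one_eq_succ, opow_succ] at h2 ⊢
    refine (mul_le_iff_of_isSuccLimit isSuccLimit_omega0).2 fun n hn => ?_
    obtain ⟨m, hm, hXm⟩ := (lt_mul_iff_of_isSuccLimit isSuccLimit_omega0).1 h2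
    calc X * n ≤ ω ^ A * m * n := mul_le_mul_left hXm.le n
      _ = ω ^ A * (m * n) := mul_assoc ..
      _ ≤ ω ^ A * ω := mul_le_mul_right (principal_mul_omega0 hm hn).le _
  · calc ω ^ (A + 1) = ω ^ A * ω := by rw [add_one_eq_succ, opow_succ]
      _ ≤ X * ω := mul_le_mul_left h1 ω

lemma mul_opow_eq {A X B : Ordinal.{0}} (h1 : ω ^ A ≤ X) (h2 : X < ω ^ (A + 1))
    (hB : B ≠ 0) : X * ω ^ B = ω ^ (A + B) := by
  have hB1 : (1 : Ordinal) ≤ B := Ordinal.one_le_iff_ne_zero.2 hB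
  have hb : 1 + (B - 1) = B := Ordinal.add_sub_cancel_of_le hB1
  calc X * ω ^ B = X * (ω ^ (1 : Ordinal) * ω ^ (B - 1)) := by rw [← opow_add, hb]
    _ = X * ω * ω ^ (B - 1) := by rw [opow_one, mul_assoc]
    _ = ω ^ (A + 1) * ω ^ (B - 1) := by rw [mul_omega0_eq h1 h2]
    _ = ω ^ (A + B) := by rw [← opow_add, add_assoc, hb]

lemma tmul_isCNF : ∀ b a : T, isCNF a → isCNF b → isCNF (tmul a b) := by
  intro b
  induction b with
  | zero => intro a _ _; rw [tmul_zero_right]; exact isCNF.z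
  | node b d _ ihd =>
    intro a ha hb
    cases a with
    | zero => rw [tmul_zero_left]; exact isCNF.z
    | node a c =>
      cases b with
      | zero =>
        rw [tmul_node_zero]
        exact tadd_isCNF _ _ ha (ihd _ ha hb.snd)
      | node b1 b2 =>
        rw [tmul_node_node]
        refine tadd_isCNF _ _ (isCNF.n (tadd_isCNF _ _ ha.fst hb.fst) isCNF.z ?_)
          (ihd _ ha hb.snd)
        simpa using tle_zero _

lemma tmul_eval : ∀ b a : T, isCNF a → isCNF b → eval (tmul a b) = eval a * eval b := by
  intro b
  induction b with
  | zero => intro a _ _; simp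
  | node b d _ ihd =>
    intro a ha hb
    cases a with
    | zero => simp
    | node a c =>
      cases b with
      | zero =>
        rw [tmul_node_zero, tadd_eval _ _ ha (tmul_isCNF _ _ ha hb.snd),
          ihd _ ha hb.snd, eval_node, eval_node, eval_zero, opow_zero, mul_add, mul_one]
      | node b1 b2 =>
        have hCNF1 : isCNF (T.node (tadd a (T.node b1 b2)) T.zero) :=
          isCNF.n (tadd_isCNF _ _ ha.fst hb.fst) isCNF.z (by simpa using tle_zero _)
        have h1 : ω ^ eval a ≤ eval (T.node a c) := by simp
        have h2 : eval (T.node a c) < ω ^ (eval a + 1) := by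
          have := eval_bound ha; rwa [left_node] at this
        have hBne : eval (T.node b1 b2) ≠ 0 := by
          have : (0:Ordinal) < ω ^ eval b1 := opow_pos _ omega0_pos
          simpa using (lt_of_lt_of_le this (le_add_right _ _)).ne'
        rw [tmul_node_node, tadd_eval _ _ hCNF1 (tmul_isCNF _ _ ha hb.snd),
          ihd _ ha hb.snd, eval_node, eval_zero, add_zero,
          tadd_eval _ _ ha.fst hb.fst, eval_node (T.node b1 b2) d, mul_add,
          mul_opow_eq h1 h2 hBne]

lemma repInner (E : Ordinal.{0}) (hrep : ∀ e ≤ E, ∃ sE : T, isCNF sE ∧ eval sE = e) :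
    ∀ o : Ordinal.{0}, o < ω ^ (E + 1) → ∃ s : T, isCNF s ∧ eval s = o := by
  intro o
  induction o using Ordinal.induction with
  | h o IHo =>
  intro ho
  rcases eq_or_ne o 0 with rfl | ho0
  · exact ⟨T.zero, isCNF.z, rfl⟩
  set e := log ω o with he
  have hoe : o < ω ^ (e + 1) := by
    rw [add_one_eq_succ]
    exact lt_opow_succ_log_self one_lt_omega0 o
  have hle : e ≤ E := by
    have := (lt_opow_iff_log_lt one_lt_omega0 ho0).1 ho
    rwa [add_one_eq_succ, Order.lt_succ_iff] at this
  obtain ⟨sE, hsE, hsEe⟩ := hrep e hle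
  have hopow_pos : (0 : Ordinal) < ω ^ e := opow_pos _ omega0_pos
  have hdm : ω ^ e * (o / ω ^ e) + o % ω ^ e = o := Ordinal.div_add_mod o (ω ^ e)
  have hr : o % ω ^ e < ω ^ e := Ordinal.mod_lt o hopow_pos.ne'
  have hn_lt : o / ω ^ e < ω := by
    rw [Ordinal.div_lt hopow_pos.ne', ← opow_succ, ← add_one_eq_succ]
    exact hoe
  have hn_pos : 0 < o / ω ^ e := by
    rw [pos_iff_ne_zero, ← Ordinal.one_le_iff_ne_zero, Ordinal.le_div hopow_pos.ne', mul_one]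
    exact opow_log_le_self ω ho0
  obtain ⟨k, hk⟩ := lt_omega0.1 hn_lt
  have hk1 : 1 ≤ k := by
    by_contra hcon
    have : k = 0 := by omega
    rw [hk, this] at hn_pos
    simp at hn_pos
  set o2 : Ordinal := ω ^ e * ((k - 1 : ℕ) : Ordinal) + o % ω ^ e with ho2
  have hmulsum : ω ^ e + ω ^ e * ((k - 1 : ℕ) : Ordinal) = ω ^ e * k := by
    nth_rewrite 1 [← mul_one (ω ^ e)]
    rw [← mul_add]
    congr 1
    have : ((1 + (k - 1) : ℕ) : Ordinal) = ((k : ℕ) : Ordinal) := by congr 1; omega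
    rw [← this]; push_cast; ring
  have hsum : ω ^ e + o2 = o := by
    rw [ho2, ← add_assoc, hmulsum, ← hk, hdm]
  have hmul2 : ω ^ e * ((k - 1 : ℕ) : Ordinal) + ω ^ e = ω ^ e * k := by
    nth_rewrite 2 [← mul_one (ω ^ e)]
    rw [← mul_add]
    congr 1
    have : (((k - 1) + 1 : ℕ) : Ordinal) = ((k : ℕ) : Ordinal) := by congr 1; omega
    rw [← this]; push_cast; ring
  have ho2lt : o2 < o := by
    calc o2 < ω ^ e * ((k - 1 : ℕ) : Ordinal) + ω ^ e := (add_lt_add_iff_left _).2 hr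
      _ = ω ^ e * k := hmul2
      _ ≤ o := by rw [← hdm, hk]; exact le_self_add
  obtain ⟨s2, hs2c, hs2e⟩ := IHo o2 ho2lt (ho2lt.trans ho)
  have hlead : eval (left s2) ≤ e := by
    cases s2 with
    | zero => simpa using Ordinal.zero_le e
    | node u v =>
      have h1 : ω ^ eval u ≤ o2 := by rw [← hs2e]; simp
      have h2 : ω ^ eval u < ω ^ (e + 1) := lt_of_le_of_lt h1 (ho2lt.trans hoe)
      have := (opow_lt_opow_iff_right one_lt_omega0).1 h2
      rw [add_one_eq_succ, Order.lt_succ_iff] at this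
      simpa using this
  refine ⟨T.node sE s2, isCNF.n hsE hs2c ?_, ?_⟩
  · exact tle_of_eval_le (isCNF_left hs2c) hsE (by rw [hsEe]; exact hlead)
  · rw [eval_node, hsEe, hs2e, hsum]

lemma repBelow : ∀ a : T, isCNF a → ∀ o : Ordinal.{0}, o < ω ^ (eval a + 1) →
    ∃ s : T, isCNF s ∧ eval s = o := by
  intro a
  induction a with
  | zero =>
    intro _ o ho
    refine repInner 0 ?_ o (by simpa using ho)
    intro e he
    exact ⟨T.zero, isCNF.z, by simpa using (nonpos_iff_eq_zero.1 he).symm⟩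
  | node a1 a2 ih1 _ =>
    intro ha o ho
    refine repInner (eval (T.node a1 a2)) ?_ o ho
    intro e he
    have : e < ω ^ (eval a1 + 1) := by
      refine lt_of_le_of_lt he ?_
      have := eval_bound ha
      rwa [left_node] at this
    exact ih1 ha.fst e this

/-- CNFs admit Euclidean division. -/
theorem cnf_division :
    ∀ a b : T, isCNF a → isCNF b → tlt T.zero b →
      ∃ c d : T, isCNF c ∧ isCNF d ∧ a = tadd (tmul b c) d ∧ tlt d b := by
  intro a b ha hb hpos
  have hβ : 0 < eval b := by
    have := eval_lt_of_tlt isCNF.z hb hpos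
    simpa using this
  have hdivle : eval a / eval b ≤ eval a := by
    rw [Ordinal.div_le hβ.ne']
    calc eval a < Order.succ (eval a) := Order.lt_succ _
      _ ≤ eval b * Order.succ (eval a) := le_mul_right _ hβ
  have hq_lt : eval a / eval b < ω ^ (eval a + 1) :=
    lt_of_le_of_lt hdivle
      (lt_of_le_of_lt (right_le_opow _ one_lt_omega0)
        ((opow_lt_opow_iff_right one_lt_omega0).2 (lt_add_one _)))
  obtain ⟨c, hc, hce⟩ := repBelow a ha _ hq_lt
  have hr_lt : eval a % eval b < eval b := Ordinal.mod_lt _ hβ.ne'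
  have hr_lt' : eval a % eval b < ω ^ (eval b + 1) :=
    lt_of_lt_of_le hr_lt
      (le_trans (right_le_opow _ one_lt_omega0)
        ((opow_le_opow_right omega0_pos le_self_add)))
  obtain ⟨d, hd, hde⟩ := repBelow b hb _ hr_lt'
  refine ⟨c, d, hc, hd, ?_, tlt_of_eval_lt hd hb (by rw [hde]; exact hr_lt)⟩
  apply eval_injective ha (tadd_isCNF _ _ (tmul_isCNF _ _ hb hc) hd)
  rw [tadd_eval _ _ (tmul_isCNF _ _ hb hc) hd, tmul_eval _ _ hb hc, hce, hde,
    Ordinal.div_add_mod]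
end

section
/- Every Cantor normal form that is neither zero nor a successor is the limit of a strictly increasing ℕ-indexed sequence of CNFs: there exists a strictly increasing sequence s : ℕ → Cnf such that the given CNF is the least upper bound of s. -/
theorem not_tlt_zero {t : T} : ¬ tlt t T.zero := fun h => nomatch h

theorem tlt_irrefl : ∀ {a : T}, ¬ tlt a a := by
  intro a
  induction a with
  | zero => exact not_tlt_zero
  | node a b iha ihb =>
    intro h
    cases h with
    | l h => exact iha h
    | r h => exact ihb h

theorem tlt_trans : ∀ {a b c : T}, tlt a b → tlt b c → tlt a c := by
  intro a b c h1 h2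
  induction h2 generalizing a with
  | z => exact absurd h1 not_tlt_zero
  | l h ih =>
    cases h1 with
    | z => exact tlt.z
    | l h' => exact tlt.l (ih h')
    | r h' => exact tlt.l h
  | r h ih =>
    cases h1 with
    | z => exact tlt.z
    | l h' => exact tlt.l h'
    | r h' => exact tlt.r (ih h')

theorem tlt_asymm {a b : T} (h1 : tlt a b) (h2 : tlt b a) : False :=
  tlt_irrefl (tlt_trans h1 h2)

theorem tlt_tri : ∀ a b : T, tlt a b ∨ a = b ∨ tlt b a := by
  intro a
  induction a with
  | zero =>
    intro b
    cases b with
    | zero => exact Or.inr (Or.inl rfl)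
    | node => exact Or.inl tlt.z
  | node a1 a2 ih1 ih2 =>
    intro b
    cases b with
    | zero => exact Or.inr (Or.inr tlt.z)
    | node b1 b2 =>
      rcases ih1 b1 with h | h | h
      · exact Or.inl (tlt.l h)
      · subst h
        rcases ih2 b2 with h | h | h
        · exact Or.inl (tlt.r h)
        · subst h; exact Or.inr (Or.inl rfl)
        · exact Or.inr (Or.inr (tlt.r h))
      · exact Or.inr (Or.inr (tlt.l h))

theorem zero_tle (t : T) : tle T.zero t := by
  cases t with
  | zero => exact Or.inr rfl
  | node => exact Or.inl tlt.z

theorem tle_trans {a b c : T} (h1 : tle a b) (h2 : tle b c) : tle a c := by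
  rcases h1 with h1 | rfl
  · rcases h2 with h2 | rfl
    · exact Or.inl (tlt_trans h1 h2)
    · exact Or.inl h1
  · exact h2

theorem left_le_of_tle {r p q : T} (h : tle r (T.node p q)) : tle (left r) p := by
  rcases h with h | rfl
  · cases h with
    | z => exact zero_tle p
    | l h' => exact Or.inl h'
    | r h' => exact Or.inr rfl
  · exact Or.inr rfl

theorem tlt_add_one : ∀ c : T, tlt c (tadd c (T.node T.zero T.zero)) := by
  intro c
  induction c with
  | zero => exact tlt.z
  | node u v ihu ihv =>
    have : tadd (T.node u v) (T.node T.zero T.zero)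
        = T.node u (tadd v (T.node T.zero T.zero)) := by
      simp [tadd, not_tlt_zero]
    rw [this]
    exact tlt.r ihv

theorem lt_add_one_le : ∀ {c p : T}, tlt p (tadd c (T.node T.zero T.zero)) → tle p c := by
  intro c
  induction c with
  | zero =>
    intro p h
    simp only [tadd] at h
    cases h with
    | z => exact Or.inr rfl
    | l h' => exact absurd h' not_tlt_zero
    | r h' => exact absurd h' not_tlt_zero
  | node u v ihu ihv =>
    intro p h
    have he : tadd (T.node u v) (T.node T.zero T.zero)
        = T.node u (tadd v (T.node T.zero T.zero)) := by
      simp [tadd, not_tlt_zero]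
    rw [he] at h
    cases h with
    | z => exact Or.inl tlt.z
    | l h' => exact Or.inl (tlt.l h')
    | r h' =>
      rcases ihv h' with h'' | rfl
      · exact Or.inl (tlt.r h'')
      · exact Or.inr rfl

/-- `sfun c i` is `ω^c · i`. -/
def sfun (c : T) : ℕ → T
  | 0 => T.zero
  | (i+1) => T.node c (sfun c i)

theorem sfun_cnf {c : T} (hc : isCNF c) :
    ∀ i, isCNF (sfun c i) ∧ tle (left (sfun c i)) c := by
  intro i
  induction i with
  | zero => exact ⟨isCNF.z, zero_tle c⟩
  | succ i ih =>
    exact ⟨isCNF.n hc ih.1 ih.2, Or.inr rfl⟩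

theorem sfun_lt (c : T) : ∀ i, tlt (sfun c i) (sfun c (i + 1)) := by
  intro i
  induction i with
  | zero => exact tlt.z
  | succ i ih => exact tlt.r ih

theorem sfun_cover (c : T) : ∀ t, isCNF t → tle (left t) c → ∃ i, tlt t (sfun c i) := by
  intro t
  induction t with
  | zero => intro _ _; exact ⟨1, tlt.z⟩
  | node s q ihs ihq =>
    intro ht hsc
    cases ht with
    | n hs hq' hle =>
      obtain ⟨j, hj⟩ := ihq hq' (tle_trans hle hsc)
      refine ⟨j + 1, ?_⟩
      rcases hsc with h | h
      · exact tlt.l h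
      · have h' : s = c := h
        subst h'
        exact tlt.r hj

/-- A CNF which is neither zero nor a successor is the least upper bound of a
strictly increasing sequence of CNFs. -/
theorem cnf_limit_has_fundamental_sequence :
    ∀ x : T, isCNF x → x ≠ T.zero →
      (¬ ∃ y : T, isCNF y ∧ x = tadd y (T.node T.zero T.zero)) →
      ∃ s : ℕ → T,
        (∀ i, isCNF (s i)) ∧
        (∀ i, tlt (s i) (s (i + 1))) ∧
        (∀ i, tle (s i) x) ∧
        (∀ b : T, isCNF b → (∀ i, tle (s i) b) → tle x b) := by
  intro x
  induction x with
  | zero => intro _ h _; exact absurd rfl h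
  | node a b iha ihb =>
    intro hx _ hns
    cases hx with
    | n ha hb hlab =>
      cases b with
      | zero =>
        -- x = ω^a
        have ha0 : a ≠ T.zero := by
          rintro rfl
          exact hns ⟨T.zero, isCNF.z, rfl⟩
        by_cases hsa : ∃ c, isCNF c ∧ a = tadd c (T.node T.zero T.zero)
        · -- a is a successor: a = c + 1, take s i = ω^c · i
          obtain ⟨c, hc, rfl⟩ := hsa
          refine ⟨sfun c, fun i => (sfun_cnf hc i).1, sfun_lt c, ?_, ?_⟩
          · intro i
            cases i with
            | zero => exact zero_tle _
            | succ i => exact Or.inl (tlt.l (tlt_add_one c))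
          · intro b' hb' hball
            rcases tlt_tri (T.node (tadd c (T.node T.zero T.zero)) T.zero) b' with h | h | h
            · exact Or.inl h
            · exact Or.inr h
            · exfalso
              cases b' with
              | zero =>
                rcases hball 1 with h' | h'
                · exact not_tlt_zero h'
                · exact T.noConfusion h'
              | node p q =>
                cases h with
                | l h' =>
                  obtain ⟨i, hi⟩ := sfun_cover c (T.node p q) hb' (lt_add_one_le h')
                  rcases hball i with h'' | h''
                  · exact tlt_asymm hi h''
                  · exact tlt_irrefl (h'' ▸ hi)
                | r h' => exact not_tlt_zero h'
        · -- a is a limit: take s i = ω^(r i)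
          obtain ⟨r, hr1, hr2, hr3, hr4⟩ := iha ha ha0 hsa
          refine ⟨fun i => T.node (r i) T.zero, ?_, ?_, ?_, ?_⟩
          · intro i; exact isCNF.n (hr1 i) isCNF.z (zero_tle _)
          · intro i; exact tlt.l (hr2 i)
          · intro i
            rcases hr3 i with h | h
            · exact Or.inl (tlt.l h)
            · exact Or.inr (h ▸ rfl)
          · intro b' hb' hball
            cases b' with
            | zero =>
              rcases hball 0 with h | h
              · exact absurd h not_tlt_zero
              · exact T.noConfusion h
            | node p q =>
              have hrp : ∀ i, tle (r i) p := by
                intro i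
                rcases hball i with h | h
                · cases h with
                  | l h' => exact Or.inl h'
                  | r h' => exact Or.inr rfl
                · injection h with h1 h2
                  exact Or.inr h1
              cases hb' with
              | n hp hq hpq =>
                rcases hr4 p hp hrp with h | rfl
                · exact Or.inl (tlt.l h)
                · cases q with
                  | zero => exact Or.inr rfl
                  | node => exact Or.inl (tlt.r tlt.z)
      | node b1 b2 =>
        -- x = ω^a + b with b ≠ 0; b is also a limit
        have hbns : ¬ ∃ y, isCNF y ∧ T.node b1 b2 = tadd y (T.node T.zero T.zero) := by
          rintro ⟨y, hy, hby⟩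
          apply hns
          refine ⟨T.node a y, isCNF.n ha hy ?_, ?_⟩
          · cases y with
            | zero => exact zero_tle a
            | node u v =>
              have : tadd (T.node u v) (T.node T.zero T.zero)
                  = T.node u (tadd v (T.node T.zero T.zero)) := by
                simp [tadd, not_tlt_zero]
              rw [this] at hby
              rw [show left (T.node u v) = u from rfl]
              have : left (T.node b1 b2) = u := by rw [hby]; rfl
              exact this ▸ hlab
          · have : tadd (T.node a y) (T.node T.zero T.zero)
                = T.node a (tadd y (T.node T.zero T.zero)) := by
              cases y with
              | zero => simp [tadd, not_tlt_zero]
              | node u v => simp [tadd, not_tlt_zero]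
            rw [this, ← hby]
        obtain ⟨r, hr1, hr2, hr3, hr4⟩ := ihb hb (by simp) hbns
        refine ⟨fun i => T.node a (r i), ?_, ?_, ?_, ?_⟩
        · intro i
          exact isCNF.n ha (hr1 i) (tle_trans (left_le_of_tle (hr3 i)) hlab)
        · intro i; exact tlt.r (hr2 i)
        · intro i
          rcases hr3 i with h | h
          · exact Or.inl (tlt.r h)
          · exact Or.inr (h ▸ rfl)
        · intro b' hb' hball
          cases b' with
          | zero =>
            rcases hball 0 with h | h
            · exact absurd h not_tlt_zero
            · exact T.noConfusion h
          | node p q =>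
            cases hb' with
            | n hp hq hpq =>
              rcases tlt_tri a p with h | rfl | h
              · exact Or.inl (tlt.l h)
              · have hrq : ∀ i, tle (r i) q := by
                  intro i
                  rcases hball i with h | h
                  · cases h with
                    | l h' => exact absurd h' tlt_irrefl
                    | r h' => exact Or.inl h'
                  · injection h with h1 h2
                    exact Or.inr h2
                rcases hr4 q hq hrq with h | rfl
                · exact Or.inl (tlt.r h)
                · exact Or.inr rfl
              · exfalso
                rcases hball 0 with h' | h'
                · cases h' with
                  | l h'' => exact tlt_asymm h h''
                  | r h'' => exact tlt_irrefl h
                · injection h' with h1 h2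
                  exact tlt_irrefl (h1 ▸ h)
end
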